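/- Let p, q, r, s be prime numbers with p < q and r < s. If the free product ℤ/p * ℤ/q embeds (as a group) into ℤ/r * ℤ/s, then p = r and q = s. -/

import Mathlib

open Monoid

namespace Stmt5Aux

variable {ι : Type*} [DecidableEq ι] {G : ι → Type*} [∀ i, Group (G i)]
  [∀ i, DecidableEq (G i)]

theorem word_prod_injective :
    Function.Injective (CoprodI.Word.prod : CoprodI.Word G → CoprodI G) :=
  fun _ _ h => (CoprodI.Word.equiv (M := G)).symm.injective h

theorem prod_equiv (x : CoprodI G) :
    (CoprodI.Word.equiv x).prod = x :=
  (CoprodI.Word.equiv (M := G)).symm_apply_apply x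

theorem equiv_prod (w : CoprodI.Word G) :
    CoprodI.Word.equiv w.prod = w :=
  (CoprodI.Word.equiv (M := G)).apply_symm_apply w

theorem chain'_replicate {α : Type*} {R : α → α → Prop} {a : α} (h : R a a) :
    ∀ n : ℕ, (List.replicate n a).Chain' R
  | 0 => List.isChain_nil
  | 1 => List.isChain_singleton a
  | (n + 2) => by
    unfold List.Chain'
    rw [List.replicate_succ, List.replicate_succ, List.isChain_cons_cons,
      ← List.replicate_succ]
    exact ⟨h, chain'_replicate h (n + 1)⟩

theorem pow_prod_ne_one {n : ℕ} (hn : n ≠ 0) (w : CoprodI.Word G)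
    {hd lst : Σ i, G i} (hhd : w.toList.head? = some hd)
    (hlst : w.toList.getLast? = some lst) (hij : hd.1 ≠ lst.1) :
    w.prod ^ n ≠ 1 := by
  have hnil : w.toList ≠ [] := by
    intro h; rw [h] at hhd; simp at hhd
  have hmem : ∀ l ∈ (List.replicate n w.toList).flatten, l.2 ≠ 1 := by
    intro l hl
    rw [List.mem_flatten] at hl
    obtain ⟨L', hL', hl⟩ := hl
    rw [List.eq_of_mem_replicate hL'] at hl
    exact w.ne_one l hl
  have hchain : (List.replicate n w.toList).flatten.Chain'
      (fun l l' => Sigma.fst l ≠ Sigma.fst l') := by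
    unfold List.Chain'
    rw [List.isChain_flatten (by
      intro hmem'
      exact hnil (List.eq_of_mem_replicate hmem').symm)]
    constructor
    · intro l hl; rw [List.eq_of_mem_replicate hl]; exact w.chain_ne
    · exact chain'_replicate (fun x hx y hy => by
        rw [hlst] at hx; rw [hhd] at hy
        simp only [Option.mem_def, Option.some_inj] at hx hy
        subst hx; subst hy
        exact hij.symm) n
  set w' : CoprodI.Word G := ⟨(List.replicate n w.toList).flatten, hmem, hchain⟩
    with hw'
  intro hcon
  have hp : w'.prod = w.prod ^ n := by
    show ((List.replicate n w.toList).flatten.map fun l => CoprodI.of l.2).prod = _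
    rw [List.map_flatten, List.map_replicate, List.prod_flatten, List.map_replicate,
      List.prod_replicate]
    rfl
  have h1 : w'.prod = CoprodI.Word.empty.prod := by
    rw [hp, hcon, CoprodI.Word.prod_empty]
  have h2 := word_prod_injective h1
  have h3 : (List.replicate n w.toList).flatten = [] := by
    have := congrArg CoprodI.Word.toList h2
    simpa [hw'] using this
  rw [List.flatten_eq_nil_iff] at h3
  exact hnil (h3 w.toList (List.mem_replicate.mpr ⟨hn, rfl⟩))

theorem exists_torsion_letter (n : ℕ) (hn : n ≠ 0) :
    ∀ (k : ℕ) (x : CoprodI G), (CoprodI.Word.equiv x).toList.length ≤ k →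
      x ≠ 1 → x ^ n = 1 → ∃ (i : ι) (g : G i), g ≠ 1 ∧ g ^ n = 1 := by
  intro k
  induction k with
  | zero =>
    intro x hlen hx hxn
    exfalso
    apply hx
    have hempty : CoprodI.Word.equiv x = CoprodI.Word.empty :=
      CoprodI.Word.ext (List.length_eq_zero_iff.mp (Nat.le_zero.mp hlen))
    have := prod_equiv x
    rw [hempty, CoprodI.Word.prod_empty] at this
    exact this.symm
  | succ k ih =>
    intro x hlen hx hxn
    set w := CoprodI.Word.equiv x with hwdef
    have hprod : w.prod = x := prod_equiv x
    rcases hL : w.toList with _ | ⟨⟨i, a⟩, L₀⟩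
    · exfalso
      apply hx
      have hempty : w = CoprodI.Word.empty := CoprodI.Word.ext hL
      rw [hempty, CoprodI.Word.prod_empty] at hprod
      exact hprod.symm
    rcases L₀ with _ | ⟨l₂, L₁⟩
    · -- single letter
      have hx_eq : x = CoprodI.of a := by
        rw [← hprod]
        show (w.toList.map fun l => CoprodI.of l.2).prod = _
        rw [hL]; simp
      refine ⟨i, a, ?_, ?_⟩
      · exact w.ne_one ⟨i, a⟩ (by rw [hL]; simp)
      · have : CoprodI.of (a ^ n) = CoprodI.of (1 : G i) := by
          rw [map_pow, map_one, ← hx_eq, hxn]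
        exact CoprodI.of_injective i this
    · -- at least two letters
      rcases e : List.getLast (l₂ :: L₁) (List.cons_ne_nil _ _) with ⟨j, b⟩
      by_cases hij : i = j
      · subst hij
        -- conjugation reduction
        have hdec : (l₂ :: L₁) = (l₂ :: L₁).dropLast ++ [(⟨i, b⟩ : Σ i, G i)] := by
          conv_lhs => rw [← List.dropLast_append_getLast
            (l := l₂ :: L₁) (List.cons_ne_nil _ _)]
          rw [e]
        set T := (l₂ :: L₁).dropLast with hT
        have hTlen : T.length = L₁.length := by
          rw [hT, List.length_dropLast]; simp
        have hx_eq : x = CoprodI.of a * (T.map fun l => CoprodI.of l.2).prod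
            * CoprodI.of b := by
          rw [← hprod]
          show (w.toList.map fun l => CoprodI.of l.2).prod = _
          rw [hL, hdec]
          simp [mul_assoc]
        set y := CoprodI.of b * x * (CoprodI.of b)⁻¹ with hy
        have hy_eq : y = CoprodI.of (b * a) * (T.map fun l => CoprodI.of l.2).prod := by
          rw [hy, hx_eq, map_mul]
          group
        have hy_ne : y ≠ 1 := by
          intro h
          apply hx
          have : x = (CoprodI.of b)⁻¹ * y * CoprodI.of b := by rw [hy]; group
          rw [this, h]; group
        have hy_pow : y ^ n = 1 := by
          rw [hy, conj_pow, hxn, mul_one, mul_inv_cancel]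
        -- properties of T
        have hTmem : ∀ l ∈ T, Sigma.snd l ≠ 1 := by
          intro l hl
          apply w.ne_one
          rw [hL]
          exact List.mem_cons_of_mem _ (List.dropLast_sublist _ |>.mem hl)
        have hchain_all : (CoprodI.Word.toList w).Chain'
            (fun l l' => Sigma.fst l ≠ Sigma.fst l') := w.chain_ne
        rw [hL] at hchain_all
        have hchain_cons : ((⟨i, a⟩ : Σ i, G i) :: T).Chain'
            (fun l l' => Sigma.fst l ≠ Sigma.fst l') := by
          apply hchain_all.prefix
          refine ⟨[(⟨i, b⟩ : Σ i, G i)], ?_⟩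
          rw [List.cons_append, ← hdec]
        have hchain_T : T.Chain' (fun l l' => Sigma.fst l ≠ Sigma.fst l') :=
          hchain_cons.tail
        by_cases hba : b * a = 1
        · -- y = prod of word T
          set wT : CoprodI.Word G := ⟨T, hTmem, hchain_T⟩ with hwT
          have hy_prod : y = wT.prod := by
            rw [hy_eq, hba, map_one, one_mul]; rfl
          have hequivy : CoprodI.Word.equiv y = wT := by
            rw [hy_prod]; exact equiv_prod wT
          apply ih y _ hy_ne hy_pow
          rw [hequivy]
          have : w.toList.length ≤ k + 1 := hlen
          rw [hL] at this
          simp only [List.length_cons] at this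
          show T.length ≤ k
          omega
        · -- y = prod of word ⟨i, b*a⟩ :: T
          have hchain_T' : ((⟨i, b * a⟩ : Σ i, G i) :: T).Chain'
              (fun l l' => Sigma.fst l ≠ Sigma.fst l') := by
            unfold List.Chain' at hchain_cons ⊢
            rw [List.isChain_cons] at hchain_cons ⊢
            exact ⟨hchain_cons.1, hchain_cons.2⟩
          have hTmem' : ∀ l ∈ (⟨i, b * a⟩ : Σ i, G i) :: T, Sigma.snd l ≠ 1 := by
            intro l hl
            rcases List.mem_cons.mp hl with h | h
            · rw [h]; exact hba
            · exact hTmem l h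
          set wT : CoprodI.Word G := ⟨(⟨i, b * a⟩ : Σ i, G i) :: T, hTmem', hchain_T'⟩
            with hwT
          have hy_prod : y = wT.prod := by
            rw [hy_eq]
            show _ = ((((⟨i, b * a⟩ : Σ i, G i) :: T)).map fun l => CoprodI.of l.2).prod
            simp
          have hequivy : CoprodI.Word.equiv y = wT := by
            rw [hy_prod]; exact equiv_prod wT
          apply ih y _ hy_ne hy_pow
          rw [hequivy]
          have : w.toList.length ≤ k + 1 := hlen
          rw [hL] at this
          simp only [List.length_cons] at this
          show T.length + 1 ≤ k
          omega
      · -- first and last letters in different factors : x has infinite order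
        exfalso
        refine pow_prod_ne_one hn w (hd := ⟨i, a⟩) (lst := ⟨j, b⟩) ?_ ?_ hij
          (by rw [hprod, hxn])
        · rw [hL]; rfl
        · rw [hL, List.getLast?_cons_cons,
            List.getLast?_eq_getLast (List.cons_ne_nil _ _), e]

/-- Main structural lemma: a nontrivial torsion relation in a free product
comes from one of the factors. -/
theorem exists_torsion (n : ℕ) (hn : n ≠ 0) (x : CoprodI G) (hx : x ≠ 1)
    (hxn : x ^ n = 1) : ∃ (i : ι) (g : G i), g ≠ 1 ∧ g ^ n = 1 :=
  exists_torsion_letter n hn _ x le_rfl hx hxn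

section Binary

universe u

variable (M N : Type u) [Group M] [Group N] [DecidableEq M] [DecidableEq N]

/-- The factors of the binary coproduct indexed by `Bool`. -/
def FG : Bool → Type _ := fun b => cond b M N

instance : ∀ b, Group (FG M N b) := fun b => by
  cases b
  · exact ‹Group N›
  · exact ‹Group M›

instance : ∀ b, DecidableEq (FG M N b) := fun b => by
  cases b
  · exact ‹DecidableEq N›
  · exact ‹DecidableEq M›

/-- The canonical map from the binary coproduct to the indexed coproduct. -/
def toCoprodI : Coprod M N →* CoprodI (FG M N) :=
  Coprod.lift (CoprodI.of (M := FG M N) (i := true)) (CoprodI.of (M := FG M N) (i := false))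

/-- The canonical map back. -/
def ofCoprodI : CoprodI (FG M N) →* Coprod M N :=
  CoprodI.lift (fun b => match b with
    | true => Coprod.inl
    | false => Coprod.inr)

theorem ofCoprodI_toCoprodI (x : Coprod M N) :
    ofCoprodI M N (toCoprodI M N x) = x := by
  have : (ofCoprodI M N).comp (toCoprodI M N) = MonoidHom.id _ := by
    apply Coprod.hom_ext
    · ext m
      show ofCoprodI M N (CoprodI.of (M := FG M N) (i := true) m) = _
      rw [ofCoprodI]
      exact CoprodI.lift_of _ _
    · ext m
      show ofCoprodI M N (CoprodI.of (M := FG M N) (i := false) m) = _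
      rw [ofCoprodI]
      exact CoprodI.lift_of _ _
  exact DFunLike.congr_fun this x

theorem toCoprodI_injective : Function.Injective (toCoprodI M N) :=
  Function.LeftInverse.injective (ofCoprodI_toCoprodI M N)

/-- If the binary free product of two groups contains an element of order `n ≠ 0`,
then one of the factors contains a nontrivial element `g` with `g ^ n = 1`. -/
theorem torsion_binary {n : ℕ} (hn : n ≠ 0) (x : Coprod M N) (hx : x ≠ 1)
    (hxn : x ^ n = 1) :
    (∃ g : M, g ≠ 1 ∧ g ^ n = 1) ∨ (∃ g : N, g ≠ 1 ∧ g ^ n = 1) := by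
  have hx' : toCoprodI M N x ≠ 1 := by
    intro h
    exact hx (toCoprodI_injective M N (by rw [h, map_one]))
  have hxn' : (toCoprodI M N x) ^ n = 1 := by rw [← map_pow, hxn, map_one]
  obtain ⟨b, g, hg1, hgn⟩ := exists_torsion n hn _ hx' hxn'
  cases b
  · exact Or.inr ⟨g, hg1, hgn⟩
  · exact Or.inl ⟨g, hg1, hgn⟩

end Binary

/-- In `Multiplicative (ZMod r)` with `r` prime, a nontrivial element with
`g ^ p = 1` for `p` prime forces `p = r`. -/
theorem eq_of_torsion {p r : ℕ} (hp : p.Prime) (hr : r.Prime)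
    (g : Multiplicative (ZMod r)) (hg1 : g ≠ 1) (hgp : g ^ p = 1) : p = r := by
  haveI : NeZero r := ⟨hr.ne_zero⟩
  have h1 : orderOf g ∣ p := orderOf_dvd_of_pow_eq_one hgp
  have h2 : orderOf g ≠ 1 := by
    rw [Ne, orderOf_eq_one_iff]
    exact hg1
  have h3 : orderOf g = p := ((Nat.dvd_prime hp).mp h1).resolve_left h2
  have h4 : orderOf g ∣ r := by
    have := orderOf_dvd_card (x := g)
    rwa [Fintype.card_multiplicative, ZMod.card] at this
  rw [h3] at h4
  exact (Nat.prime_dvd_prime_iff_eq hp hr).mp h4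

end Stmt5Aux

theorem stmt5 (p q r s : ℕ) (hp : p.Prime) (hq : q.Prime) (hr : r.Prime)
    (hs : s.Prime) (hpq : p < q) (hrs : r < s)
    (f : Monoid.Coprod (Multiplicative (ZMod p)) (Multiplicative (ZMod q)) →*
         Monoid.Coprod (Multiplicative (ZMod r)) (Multiplicative (ZMod s)))
    (hf : Function.Injective f) :
    p = r ∧ q = s := by
  haveI : NeZero p := ⟨hp.ne_zero⟩
  haveI : NeZero q := ⟨hq.ne_zero⟩
  -- elements of order p and q in the source
  have key : ∀ t : ℕ, t.Prime →
      (∃ x : Monoid.Coprod (Multiplicative (ZMod p)) (Multiplicative (ZMod q)),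
        x ≠ 1 ∧ x ^ t = 1) → t = r ∨ t = s := by
    intro t ht ⟨x, hx1, hxt⟩
    have hfx1 : f x ≠ 1 := fun h => hx1 (hf (by rw [h, map_one]))
    have hfxt : (f x) ^ t = 1 := by rw [← map_pow, hxt, map_one]
    rcases Stmt5Aux.torsion_binary _ _ ht.ne_zero (f x) hfx1 hfxt with ⟨g, hg1, hgt⟩ |
      ⟨g, hg1, hgt⟩
    · exact Or.inl (Stmt5Aux.eq_of_torsion ht hr g hg1 hgt)
    · exact Or.inr (Stmt5Aux.eq_of_torsion ht hs g hg1 hgt)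
  -- element of order p
  have hp' : p = r ∨ p = s := by
    apply key p hp
    refine ⟨Monoid.Coprod.inl (Multiplicative.ofAdd (1 : ZMod p)), ?_, ?_⟩
    · intro h
      haveI : Fact (1 < p) := ⟨hp.one_lt⟩
      have h1 : Monoid.Coprod.inl (Multiplicative.ofAdd (1 : ZMod p)) =
          (Monoid.Coprod.inl 1 :
            Monoid.Coprod (Multiplicative (ZMod p)) (Multiplicative (ZMod q))) := by
        rw [h, map_one]
      have h2 := Monoid.Coprod.inl_injective h1
      simp at h2
    · rw [← map_pow, ← ofAdd_nsmul]
      norm_num [ZMod.natCast_self]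
  have hq' : q = r ∨ q = s := by
    apply key q hq
    refine ⟨Monoid.Coprod.inr (Multiplicative.ofAdd (1 : ZMod q)), ?_, ?_⟩
    · intro h
      haveI : Fact (1 < q) := ⟨hq.one_lt⟩
      have h1 : Monoid.Coprod.inr (Multiplicative.ofAdd (1 : ZMod q)) =
          (Monoid.Coprod.inr 1 :
            Monoid.Coprod (Multiplicative (ZMod p)) (Multiplicative (ZMod q))) := by
        rw [h, map_one]
      have h2 := Monoid.Coprod.inr_injective h1
      simp at h2
    · rw [← map_pow, ← ofAdd_nsmul]
      norm_num [ZMod.natCast_self]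
  -- conclude
  rcases hp' with hpr | hps
  · rcases hq' with hqr | hqs
    · omega
    · exact ⟨hpr, hqs⟩
  · rcases hq' with hqr | hqs
    · omega
    · omega
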